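/- In a complete d-ary tree of height h, the hitting time of a simple random walk from a vertex at distance l from the root to the root equals f_h(d) - f_{h-l}(d), where f_0(d) = 0 and f_n(d) = (Σ_{i=0}^{n-1} (2n-2i) d^i) - n for n ≥ 1. -/

import Mathlib

open scoped Classical

/-- Transition probability of the simple random walk on `G`. -/
noncomputable def stepProb {V : Type*} [Fintype V] (G : SimpleGraph V) (a b : V) : ℝ :=
  if G.Adj a b then 1 / (G.degree a) else 0

/-- Probability that the simple random walk started at `u` follows the step sequence `w`. -/
noncomputable def walkProb {V : Type*} [Fintype V] (G : SimpleGraph V) :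
    (u : V) → {n : ℕ} → (Fin n → V) → ℝ
  | _, 0, _ => 1
  | u, n + 1, w => stepProb G u (w 0) * walkProb G (w 0) (fun i : Fin n => w i.succ)

/-- Probability that the walk started at `u` first reaches `v` at time exactly `n` (for `n ≥ 1`). -/
noncomputable def firstHitProb {V : Type*} [Fintype V] (G : SimpleGraph V) (u v : V) (n : ℕ) : ℝ :=
  ∑ w ∈ Finset.univ.filter (fun w : Fin n → V =>
      (∀ i : Fin n, (i : ℕ) + 1 < n → w i ≠ v) ∧ ∀ i : Fin n, (i : ℕ) + 1 = n → w i = v),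
    walkProb G u w

/-- Expected hitting time of `v` for the simple random walk on `G` started at `u`. -/
noncomputable def hittingTime {V : Type*} [Fintype V] (G : SimpleGraph V) (u v : V) : ℝ :=
  if u = v then 0 else ∑' n : ℕ, (n : ℝ) * firstHitProb G u v n

/-- Expected first return time to `v` of the simple random walk on `G` started at `v`. -/
noncomputable def expectedReturnTime {V : Type*} [Fintype V] (G : SimpleGraph V) (v : V) : ℝ :=
  ∑' n : ℕ, (n : ℝ) * firstHitProb G v v n
/-- The polynomial `f_n(d)` from the hitting-time formulas for complete `d`-ary trees. -/
noncomputable def f (n : ℕ) (d : ℝ) : ℝ :=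
  if n = 0 then 0 else (∑ i ∈ Finset.range n, ((2 * n : ℝ) - 2 * i) * d ^ i) - n

/-- The complete `d`-ary tree of height `h`: vertices are sequences over `Fin d` of
length at most `h`, and a vertex is adjacent to each of its one-step extensions. -/
def daryTree (d h : ℕ) : SimpleGraph (Σ n : Fin (h + 1), Fin (n : ℕ) → Fin d) :=
  SimpleGraph.fromRel (fun x y =>
    ∃ _ : (x.1 : ℕ) + 1 = (y.1 : ℕ),
      ∀ i : Fin (x.1 : ℕ), y.2 ⟨i.val, by have := i.isLt; omega⟩ = x.2 i)

namespace HT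

variable {V : Type*} [Fintype V] (G : SimpleGraph V)

lemma stepProb_nonneg (a b : V) : 0 ≤ stepProb G a b := by
  unfold stepProb; split <;> positivity

lemma stepProb_pos {a b : V} (h : G.Adj a b) : 0 < stepProb G a b := by
  have hd : 0 < G.degree a := by
    rw [SimpleGraph.degree_pos_iff_exists_adj]; exact ⟨b, h⟩
  rw [stepProb, if_pos h]
  positivity

lemma stepProb_le_one (a b : V) : stepProb G a b ≤ 1 := by
  rw [stepProb]
  split
  · rename_i h
    have hd : 0 < G.degree a := by
      rw [SimpleGraph.degree_pos_iff_exists_adj]; exact ⟨b, h⟩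
    rw [div_le_one (by exact_mod_cast hd)]
    exact_mod_cast hd
  · norm_num

lemma sum_stepProb {a : V} (h : 0 < G.degree a) : ∑ b, stepProb G a b = 1 := by
  have h1 : ∀ b, stepProb G a b = if G.Adj a b then (1 / (G.degree a : ℝ)) else 0 :=
    fun b => rfl
  rw [Finset.sum_congr rfl (fun b _ => h1 b)]
  rw [Finset.sum_ite, Finset.sum_const_zero, add_zero, Finset.sum_const]
  have h2 : Finset.univ.filter (fun b => G.Adj a b) = G.neighborFinset a := by
    ext b; simp [SimpleGraph.mem_neighborFinset]
  rw [h2, SimpleGraph.card_neighborFinset_eq_degree, nsmul_eq_mul]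
  field_simp

lemma walkProb_zero (u : V) (w : Fin 0 → V) : walkProb G u w = 1 := rfl

lemma walkProb_succ (u : V) {n : ℕ} (w : Fin (n + 1) → V) :
    walkProb G u w = stepProb G u (w 0) * walkProb G (w 0) (fun i : Fin n => w i.succ) := rfl

lemma walkProb_nonneg : ∀ {n : ℕ} (u : V) (w : Fin n → V), 0 ≤ walkProb G u w
  | 0, u, w => by rw [walkProb_zero]; norm_num
  | n + 1, u, w => by
      rw [walkProb_succ]
      exact mul_nonneg (stepProb_nonneg G u _) (walkProb_nonneg _ _)

lemma walkProb_cons (u b : V) {n : ℕ} (t : Fin n → V) :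
    walkProb G u (Fin.cons b t) = stepProb G u b * walkProb G b t := by
  rw [walkProb_succ]
  simp

lemma sum_cons {n : ℕ} (F : (Fin (n + 1) → V) → ℝ) :
    ∑ w : Fin (n + 1) → V, F w = ∑ b : V, ∑ t : Fin n → V, F (Fin.cons b t) := by
  have hbij : Function.Bijective (fun p : V × (Fin n → V) => (Fin.cons p.1 p.2 : Fin (n+1) → V)) := by
    constructor
    · rintro ⟨b, t⟩ ⟨c, s⟩ hpq
      have h0 : b = c := by
        have := congrFun hpq 0; simpa using this
      have h1 : t = s := by
        funext i
        have := congrFun hpq i.succ; simpa using this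
      simp [h0, h1]
    · intro w
      exact ⟨(w 0, Fin.tail w), Fin.cons_self_tail w⟩
  have := Fintype.sum_bijective _ hbij
    (fun p : V × (Fin n → V) => F (Fin.cons p.1 p.2)) F (fun p => rfl)
  rw [Fintype.sum_prod_type] at this
  exact this.symm

variable (v : V)

noncomputable def notHit (n : ℕ) (u : V) : ℝ :=
  ∑ w ∈ Finset.univ.filter (fun w : Fin n → V => ∀ i, w i ≠ v), walkProb G u w

lemma notHit_nonneg (n : ℕ) (u : V) : 0 ≤ notHit G v n u :=
  Finset.sum_nonneg fun w _ => walkProb_nonneg G u w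

lemma notHit_zero (u : V) : notHit G v 0 u = 1 := by
  rw [notHit]
  rw [Finset.filter_true_of_mem (fun w _ => fun i => i.elim0)]
  rw [Fintype.sum_unique]
  rfl

lemma firstHitProb_nonneg (u : V) (n : ℕ) : 0 ≤ firstHitProb G u v n :=
  Finset.sum_nonneg fun w _ => walkProb_nonneg G u w

lemma notHit_succ (n : ℕ) (u : V) :
    notHit G v (n + 1) u = ∑ b, if b = v then 0 else stepProb G u b * notHit G v n b := by
  rw [notHit, Finset.sum_filter, sum_cons]
  refine Finset.sum_congr rfl fun b _ => ?_
  by_cases hb : b = v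
  · rw [if_pos hb]
    refine Finset.sum_eq_zero fun t _ => ?_
    rw [if_neg]
    intro hcon
    exact hcon 0 (by simp [hb])
  · rw [if_neg hb, notHit, Finset.sum_filter, Finset.mul_sum]
    refine Finset.sum_congr rfl fun t _ => ?_
    have hiff : (∀ i : Fin (n + 1), (Fin.cons b t : Fin (n+1) → V) i ≠ v) ↔ (∀ i : Fin n, t i ≠ v) := by
      constructor
      · intro hh i; simpa using hh i.succ
      · intro hh i
        refine Fin.cases ?_ ?_ i
        · simpa using hb
        · intro j; simpa using hh j
    by_cases hc : ∀ i : Fin n, t i ≠ v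
    · rw [if_pos (hiff.mpr hc), if_pos hc, walkProb_cons]
    · rw [if_neg (fun hh => hc (hiff.mp hh)), if_neg hc, mul_zero]

lemma firstHit_one (u : V) : firstHitProb G u v 1 = stepProb G u v := by
  rw [firstHitProb, Finset.sum_filter, sum_cons]
  have h1 : ∀ b : V, (∑ t : Fin 0 → V,
      if ((∀ i : Fin 1, (i : ℕ) + 1 < 1 → (Fin.cons b t : Fin 1 → V) i ≠ v) ∧
          ∀ i : Fin 1, (i : ℕ) + 1 = 1 → (Fin.cons b t : Fin 1 → V) i = v)
      then walkProb G u (Fin.cons b t) else 0) = if b = v then stepProb G u b else 0 := by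
    intro b
    rw [Fintype.sum_unique]
    by_cases hb : b = v
    · rw [if_pos hb, if_pos, walkProb_cons, walkProb_zero, mul_one]
      constructor
      · intro i hi; omega
      · intro i _
        have h0 : i = 0 := Fin.fin_one_eq_zero i
        rw [h0]; simpa using hb
    · rw [if_neg hb, if_neg]
      rintro ⟨-, h2⟩
      exact hb (by simpa using h2 0 rfl)
  rw [Finset.sum_congr rfl (fun b _ => h1 b), Finset.sum_ite_eq' Finset.univ v
    (fun b => stepProb G u b)]
  simp

lemma firstHit_succ_succ (n : ℕ) (u : V) :
    firstHitProb G u v (n + 2) =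
      ∑ b, if b = v then 0 else stepProb G u b * firstHitProb G b v (n + 1) := by
  rw [firstHitProb, Finset.sum_filter, sum_cons]
  refine Finset.sum_congr rfl fun b _ => ?_
  by_cases hb : b = v
  · rw [if_pos hb]
    refine Finset.sum_eq_zero fun t _ => ?_
    rw [if_neg]
    rintro ⟨h1, -⟩
    exact h1 0 (by norm_num) (by simp [hb])
  · rw [if_neg hb, firstHitProb, Finset.sum_filter, Finset.mul_sum]
    refine Finset.sum_congr rfl fun t _ => ?_
    have hiff : ((∀ i : Fin (n + 2), (i : ℕ) + 1 < n + 2 → (Fin.cons b t : Fin (n+2) → V) i ≠ v) ∧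
          ∀ i : Fin (n + 2), (i : ℕ) + 1 = n + 2 → (Fin.cons b t : Fin (n+2) → V) i = v) ↔
        ((∀ i : Fin (n + 1), (i : ℕ) + 1 < n + 1 → t i ≠ v) ∧
          ∀ i : Fin (n + 1), (i : ℕ) + 1 = n + 1 → t i = v) := by
      constructor
      · rintro ⟨h1, h2⟩
        constructor
        · intro i hi
          have := h1 i.succ (by simpa using by omega)
          simpa using this
        · intro i hi
          have := h2 i.succ (by simpa using by omega)
          simpa using this
      · rintro ⟨h1, h2⟩
        constructor
        · intro i
          refine Fin.cases ?_ ?_ i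
          · intro _; simpa using hb
          · intro j hj
            simp only [Fin.val_succ] at hj
            simpa using h1 j (by omega)
        · intro i
          refine Fin.cases ?_ ?_ i
          · intro h0; simp at h0
          · intro j hj
            simp only [Fin.val_succ] at hj
            simpa using h2 j (by omega)
    by_cases hc : (∀ i : Fin (n + 1), (i : ℕ) + 1 < n + 1 → t i ≠ v) ∧
        ∀ i : Fin (n + 1), (i : ℕ) + 1 = n + 1 → t i = v
    · rw [if_pos (hiff.mpr hc), if_pos hc, walkProb_cons]
    · rw [if_neg (fun hh => hc (hiff.mp hh)), if_neg hc, mul_zero]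

variable {G}

lemma notHit_le_one (hdeg : ∀ a, 0 < G.degree a) : ∀ (n : ℕ) (u : V), notHit G v n u ≤ 1 := by
  intro n
  induction n with
  | zero => intro u; rw [notHit_zero]
  | succ n ih =>
      intro u
      rw [notHit_succ]
      calc ∑ b, (if b = v then 0 else stepProb G u b * notHit G v n b)
          ≤ ∑ b, stepProb G u b := by
            refine Finset.sum_le_sum fun b _ => ?_
            by_cases hb : b = v
            · rw [if_pos hb]; exact stepProb_nonneg G u b
            · rw [if_neg hb]
              calc stepProb G u b * notHit G v n b ≤ stepProb G u b * 1 :=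
                    mul_le_mul_of_nonneg_left (ih b) (stepProb_nonneg G u b)
                _ = stepProb G u b := mul_one _
        _ = 1 := sum_stepProb G (hdeg u)

lemma notHit_succ_le (hdeg : ∀ a, 0 < G.degree a) :
    ∀ (n : ℕ) (u : V), notHit G v (n + 1) u ≤ notHit G v n u := by
  intro n
  induction n with
  | zero =>
      intro u
      rw [notHit_zero]
      exact notHit_le_one v hdeg 1 u
  | succ n ih =>
      intro u
      rw [notHit_succ, notHit_succ]
      refine Finset.sum_le_sum fun b _ => ?_
      by_cases hb : b = v
      · simp [hb]
      · rw [if_neg hb, if_neg hb]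
        exact mul_le_mul_of_nonneg_left (ih b) (stepProb_nonneg G u b)

lemma notHit_anti (hdeg : ∀ a, 0 < G.degree a) {m n : ℕ} (hmn : m ≤ n) (u : V) :
    notHit G v n u ≤ notHit G v m u := by
  induction n with
  | zero => rw [Nat.le_zero.mp hmn]
  | succ n ih =>
      rcases Nat.lt_or_ge m (n+1) with h | h
      · exact (notHit_succ_le v hdeg n u).trans (ih (by omega))
      · rw [Nat.le_antisymm hmn h]

lemma firstHit_le_notHit (hdeg : ∀ a, 0 < G.degree a) :
    ∀ (n : ℕ) (u : V), firstHitProb G u v (n + 1) ≤ notHit G v n u := by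
  intro n
  induction n with
  | zero =>
      intro u
      rw [firstHit_one, notHit_zero]
      exact stepProb_le_one G u v
  | succ n ih =>
      intro u
      rw [firstHit_succ_succ, notHit_succ]
      refine Finset.sum_le_sum fun b _ => ?_
      by_cases hb : b = v
      · simp [hb]
      · rw [if_neg hb, if_neg hb]
        exact mul_le_mul_of_nonneg_left (ih b) (stepProb_nonneg G u b)

lemma partition (hdeg : ∀ a, 0 < G.degree a) :
    ∀ (n : ℕ) (u : V),
      notHit G v n u + ∑ m ∈ Finset.range n, firstHitProb G u v (m + 1) = 1 := by
  intro n
  induction n with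
  | zero => intro u; simp [notHit_zero]
  | succ n ih =>
      intro u
      have hsplit : ∀ b : V, stepProb G u b =
          (if b = v then stepProb G u b else 0) + (if b = v then 0 else stepProb G u b) := by
        intro b; by_cases hb : b = v <;> simp [hb]
      have hstep : ∑ b, (if b = v then 0 else stepProb G u b) = 1 - stepProb G u v := by
        have h1 : (1 : ℝ) = ∑ b, stepProb G u b := (sum_stepProb G (hdeg u)).symm
        rw [h1, Finset.sum_congr rfl (fun b _ => hsplit b), Finset.sum_add_distrib,
          Finset.sum_ite_eq' Finset.univ v (fun b => stepProb G u b)]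
        simp
      have hsum' : ∑ m ∈ Finset.range (n + 1), firstHitProb G u v (m + 1) =
          (∑ m ∈ Finset.range n, firstHitProb G u v (m + 2)) + firstHitProb G u v 1 := by
        rw [Finset.sum_range_succ']
      rw [hsum', notHit_succ, firstHit_one]
      have hrw : ∀ m ∈ Finset.range n, firstHitProb G u v (m + 2) =
          ∑ b, (if b = v then 0 else stepProb G u b * firstHitProb G b v (m + 1)) :=
        fun m _ => firstHit_succ_succ (G := G) v m u
      rw [Finset.sum_congr rfl hrw, Finset.sum_comm]
      have hcomb : (∑ b, (if b = v then 0 else stepProb G u b * notHit G v n b)) +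
          ((∑ b, ∑ m ∈ Finset.range n,
            (if b = v then 0 else stepProb G u b * firstHitProb G b v (m + 1)))
            + stepProb G u v) =
          (∑ b, (if b = v then 0 else stepProb G u b)) + stepProb G u v := by
        rw [← add_assoc, ← Finset.sum_add_distrib]
        congr 1
        refine Finset.sum_congr rfl fun b _ => ?_
        by_cases hb : b = v
        · simp [hb]
        · rw [if_neg hb, Finset.sum_ite_of_false (fun _ _ => hb), if_neg hb]
          rw [← Finset.mul_sum, ← mul_add, ih b]
          exact mul_one _
      rw [hcomb, hstep]
      ring

section BigM

variable (hA : (Finset.univ.filter (· ≠ v)).Nonempty)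

noncomputable def bigM (G : SimpleGraph V) (n : ℕ) : ℝ :=
  (Finset.univ.filter (· ≠ v)).sup' hA (fun u => notHit G v n u)

lemma notHit_le_bigM (n : ℕ) {u : V} (hu : u ≠ v) : notHit G v n u ≤ bigM v hA G n :=
  Finset.le_sup' _ (by simp [hu])

lemma bigM_nonneg (n : ℕ) : 0 ≤ bigM v hA G n := by
  obtain ⟨u, hu⟩ := hA.exists_mem
  have hu' : u ≠ v := by simpa using hu
  exact (notHit_nonneg (G := G) v n u).trans (notHit_le_bigM v hA n hu')

lemma bigM_le_one (hdeg : ∀ a, 0 < G.degree a) (n : ℕ) : bigM v hA G n ≤ 1 :=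
  Finset.sup'_le _ _ fun u _ => notHit_le_one v hdeg n u

lemma bigM_anti (hdeg : ∀ a, 0 < G.degree a) {m n : ℕ} (hmn : m ≤ n) :
    bigM v hA G n ≤ bigM v hA G m :=
  Finset.sup'_le _ _ fun u hu =>
    (notHit_anti v hdeg hmn u).trans (notHit_le_bigM v hA m (by simpa using hu))

lemma notHit_le_mul (k n : ℕ) :
    ∀ u : V, u ≠ v → notHit G v (k + n) u ≤ notHit G v k u * bigM v hA G n := by
  induction k with
  | zero =>
      intro u hu
      rw [zero_add, notHit_zero, one_mul]
      exact notHit_le_bigM v hA n hu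
  | succ k ih =>
      intro u _
      have hkn : k + 1 + n = (k + n) + 1 := by omega
      rw [hkn, notHit_succ, notHit_succ, Finset.sum_mul]
      refine Finset.sum_le_sum fun b _ => ?_
      by_cases hb : b = v
      · simp [hb]
      · rw [if_neg hb, if_neg hb, mul_assoc]
        exact mul_le_mul_of_nonneg_left (ih b hb) (stepProb_nonneg G u b)

lemma bigM_submul (k n : ℕ) : bigM v hA G (k + n) ≤ bigM v hA G k * bigM v hA G n := by
  refine Finset.sup'_le _ _ fun u hu => ?_
  have hu' : u ≠ v := by simpa using hu
  exact (notHit_le_mul v hA k n u hu').trans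
    (mul_le_mul_of_nonneg_right (notHit_le_bigM v hA k hu') (bigM_nonneg v hA n))

lemma bigM_pow (hdeg : ∀ a, 0 < G.degree a) (N : ℕ) :
    ∀ k : ℕ, bigM v hA G (k * N) ≤ (bigM v hA G N) ^ k := by
  intro k
  induction k with
  | zero => simpa using bigM_le_one v hA hdeg 0
  | succ k ih =>
      have h1 : (k + 1) * N = N + k * N := by ring
      rw [h1, pow_succ']
      exact (bigM_submul v hA N (k * N)).trans
        (mul_le_mul_of_nonneg_left ih (bigM_nonneg v hA N))

lemma notHit_lt_one (hdeg : ∀ a, 0 < G.degree a) :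
    ∀ {u w : V} (p : G.Walk u w), u ≠ w → notHit G w p.length u < 1 := by
  intro u w p
  induction p with
  | nil => intro hu; exact absurd rfl hu
  | @cons a b c hadj q ih =>
      intro _
      rw [SimpleGraph.Walk.length_cons, notHit_succ]
      have hterm : ∀ x : V, (if x = c then 0 else stepProb G a x * notHit G c q.length x) ≤
          (if x = c then 0 else stepProb G a x) := by
        intro x
        by_cases hx : x = c
        · simp [hx]
        · rw [if_neg hx, if_neg hx]
          calc stepProb G a x * notHit G c q.length x ≤ stepProb G a x * 1 :=
                mul_le_mul_of_nonneg_left (notHit_le_one c hdeg _ x) (stepProb_nonneg G a x)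
            _ = stepProb G a x := mul_one _
      have hsum_le : ∑ x, (if x = c then 0 else stepProb G a x) ≤ 1 := by
        calc ∑ x, (if x = c then 0 else stepProb G a x) ≤ ∑ x, stepProb G a x := by
              refine Finset.sum_le_sum fun x _ => ?_
              by_cases hx : x = c
              · rw [if_pos hx]; exact stepProb_nonneg G a x
              · rw [if_neg hx]
          _ = 1 := sum_stepProb G (hdeg a)
      by_cases hb : b = c
      · have hstep : ∑ x, (if x = c then 0 else stepProb G a x) = 1 - stepProb G a c := by
          have hsplit : ∀ x : V, stepProb G a x =
              (if x = c then stepProb G a x else 0) + (if x = c then 0 else stepProb G a x) := by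
            intro x; by_cases hx : x = c <;> simp [hx]
          have h1 : (1 : ℝ) = ∑ x, stepProb G a x := (sum_stepProb G (hdeg a)).symm
          rw [h1, Finset.sum_congr rfl (fun x _ => hsplit x), Finset.sum_add_distrib,
            Finset.sum_ite_eq' Finset.univ c (fun x => stepProb G a x)]
          simp
        have hpos : 0 < stepProb G a c := stepProb_pos G (hb ▸ hadj)
        calc ∑ x, (if x = c then 0 else stepProb G a x * notHit G c q.length x)
            ≤ ∑ x, (if x = c then 0 else stepProb G a x) := Finset.sum_le_sum fun x _ => hterm x
          _ = 1 - stepProb G a c := hstep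
          _ < 1 := by linarith
      · have hlt : stepProb G a b * notHit G c q.length b < stepProb G a b :=
          (mul_lt_of_lt_one_right (stepProb_pos G hadj) (ih hb))
        have hstrict : ∑ x, (if x = c then 0 else stepProb G a x * notHit G c q.length x) <
            ∑ x, (if x = c then 0 else stepProb G a x) := by
          refine Finset.sum_lt_sum (fun x _ => hterm x) ⟨b, Finset.mem_univ b, ?_⟩
          rw [if_neg hb, if_neg hb]
          exact hlt
        exact hstrict.trans_le hsum_le

lemma exists_contraction (hdeg : ∀ a, 0 < G.degree a) (hconn : ∀ u : V, G.Reachable u v) :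
    ∃ N : ℕ, 0 < N ∧ bigM v hA G N < 1 := by
  classical
  let len : V → ℕ := fun u => if hu : u ≠ v then (hconn u).exists_walk_length_eq_dist.choose.length else 1
  refine ⟨(Finset.univ.filter (· ≠ v)).sup len + 1, Nat.succ_pos _, ?_⟩
  rw [bigM, Finset.sup'_lt_iff]
  intro u hu
  have hu' : u ≠ v := by simpa using hu
  have hlen : len u = ((hconn u).exists_walk_length_eq_dist.choose : G.Walk u v).length := by
    simp only [len, dif_pos hu']
  have hle : len u ≤ (Finset.univ.filter (· ≠ v)).sup len + 1 :=
    le_trans (Finset.le_sup (by simp [hu'])) (Nat.le_succ _)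
  calc notHit G v ((Finset.univ.filter (· ≠ v)).sup len + 1) u
      ≤ notHit G v (len u) u := notHit_anti v hdeg hle u
    _ < 1 := by
        rw [hlen]
        exact notHit_lt_one hdeg _ hu'

end BigM

lemma exists_geom (hA : (Finset.univ.filter (· ≠ v)).Nonempty)
    (hdeg : ∀ a, 0 < G.degree a) (hconn : ∀ u : V, G.Reachable u v) :
    ∃ C r : ℝ, 0 < r ∧ r < 1 ∧ 0 ≤ C ∧
      ∀ (n : ℕ) (u : V), u ≠ v → notHit G v n u ≤ C * r ^ n := by
  obtain ⟨N, hN0, hMN⟩ := exists_contraction v hA hdeg hconn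
  set c := bigM v hA G N with hc
  have hc0 : 0 ≤ c := bigM_nonneg v hA N
  set r0 : ℝ := c ^ ((N : ℝ)⁻¹) with hr0
  have hr0N : r0 ^ N = c := Real.rpow_inv_natCast_pow hc0 (by omega)
  set r : ℝ := max r0 (1 / 2) with hrdef
  have hrpos : 0 < r := lt_of_lt_of_le (by norm_num) (le_max_right _ _)
  have hr1 : r < 1 := by
    apply max_lt _ (by norm_num)
    rcases eq_or_lt_of_le hc0 with h | h
    · rw [hr0, ← h, Real.zero_rpow (by positivity)]; norm_num
    · exact Real.rpow_lt_one hc0 hMN (by positivity)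
  have hcr : c ≤ r ^ N := by
    rw [← hr0N]
    exact pow_le_pow_left₀ (Real.rpow_nonneg hc0 _) (le_max_left _ _) N
  refine ⟨r⁻¹ ^ N, r, hrpos, hr1, by positivity, ?_⟩
  intro n u hu
  have hdm := Nat.div_add_mod n N
  have hmod : n % N < N := Nat.mod_lt n (by omega)
  have hcomm : n / N * N = N * (n / N) := Nat.mul_comm _ _
  have hkn : N * (n / N) ≤ n := by omega
  have hkn2 : n < N * (n / N) + N := by omega
  have h1 : notHit G v n u ≤ bigM v hA G n := notHit_le_bigM v hA n hu
  have h2 : bigM v hA G n ≤ bigM v hA G ((n / N) * N) :=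
    bigM_anti v hA hdeg (by omega)
  have h3 : bigM v hA G ((n / N) * N) ≤ c ^ (n / N) := bigM_pow v hA hdeg N (n / N)
  have h4 : c ^ (n / N) ≤ (r ^ N) ^ (n / N) := pow_le_pow_left₀ hc0 hcr (n / N)
  have h5 : (r ^ N) ^ (n / N) = r ^ (N * (n / N)) := by rw [← pow_mul]
  have h6 : r ^ (N * (n / N)) ≤ r⁻¹ ^ N * r ^ n := by
    have hsplit : r ^ n = r ^ (N * (n / N)) * r ^ (n - N * (n / N)) := by
      rw [← pow_add]
      congr 1
      omega
    have hge : r ^ N ≤ r ^ (n - N * (n / N)) :=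
      pow_le_pow_of_le_one (le_of_lt hrpos) (le_of_lt hr1) (by omega)
    have h7 : 1 ≤ r⁻¹ ^ N * r ^ (n - N * (n / N)) := by
      rw [inv_pow, ← div_le_iff₀' (by positivity)]
      simpa using hge
    calc r ^ (N * (n / N)) = r ^ (N * (n / N)) * 1 := (mul_one _).symm
      _ ≤ r ^ (N * (n / N)) * (r⁻¹ ^ N * r ^ (n - N * (n / N))) :=
          mul_le_mul_of_nonneg_left h7 (by positivity)
      _ = r⁻¹ ^ N * (r ^ (N * (n / N)) * r ^ (n - N * (n / N))) := by ring
      _ = r⁻¹ ^ N * r ^ n := by rw [← hsplit]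
  calc notHit G v n u ≤ c ^ (n / N) := le_trans h1 (le_trans h2 h3)
    _ ≤ r ^ (N * (n / N)) := h5 ▸ h4
    _ ≤ r⁻¹ ^ N * r ^ n := h6

section Eq

variable (hdeg : ∀ a, 0 < G.degree a) (hconn : ∀ u : V, G.Reachable u v)
  (hA : (Finset.univ.filter (· ≠ v)).Nonempty)

lemma summable_geom_aux {C r : ℝ} (h0 : 0 < r) (h1 : r < 1) :
    Summable (fun n : ℕ => ((n : ℝ) + 1) * (C * r ^ n)) := by
  have hs1 : Summable (fun n : ℕ => (n : ℝ) * r ^ n) := by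
    have := summable_pow_mul_geometric_of_norm_lt_one 1
      (r := r) (by rw [Real.norm_eq_abs, abs_of_pos h0]; exact h1)
    simpa using this
  have hs2 : Summable (fun n : ℕ => r ^ n) := summable_geometric_of_lt_one (le_of_lt h0) h1
  have : Summable (fun n : ℕ => C * ((n : ℝ) * r ^ n) + C * r ^ n) :=
    (hs1.mul_left C).add (hs2.mul_left C)
  refine this.congr fun n => ?_
  ring

include hdeg hconn hA

lemma summable_shifted (u : V) (hu : u ≠ v) :
    Summable (fun n : ℕ => ((n : ℝ) + 1) * firstHitProb G u v (n + 1)) := by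
  obtain ⟨C, r, hr0, hr1, hC, hbound⟩ := exists_geom v hA hdeg hconn
  refine Summable.of_nonneg_of_le (fun n => ?_) (fun n => ?_) (summable_geom_aux (C := C) hr0 hr1)
  · exact mul_nonneg (by positivity) (firstHitProb_nonneg (G := G) v u (n + 1))
  · refine mul_le_mul_of_nonneg_left ?_ (by positivity)
    exact (firstHit_le_notHit v hdeg n u).trans (hbound n u hu)

lemma summable_fh (u : V) (hu : u ≠ v) :
    Summable (fun n : ℕ => firstHitProb G u v (n + 1)) := by
  obtain ⟨C, r, hr0, hr1, hC, hbound⟩ := exists_geom v hA hdeg hconn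
  refine Summable.of_nonneg_of_le (fun n => firstHitProb_nonneg (G := G) v u (n + 1)) (fun n => ?_)
    ((summable_geometric_of_lt_one (le_of_lt hr0) hr1).mul_left C)
  exact (firstHit_le_notHit v hdeg n u).trans (hbound n u hu)

lemma summable_nfh (u : V) (hu : u ≠ v) :
    Summable (fun n : ℕ => (n : ℝ) * firstHitProb G u v n) := by
  have h2 : Summable (fun n : ℕ => (((n + 1 : ℕ)) : ℝ) * firstHitProb G u v (n + 1)) := by
    refine (summable_shifted v hdeg hconn hA u hu).congr fun n => ?_
    push_cast
    ring
  exact (summable_nat_add_iff (f := fun n : ℕ => (n : ℝ) * firstHitProb G u v n) 1).mp h2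

lemma hasSum_fh_one (u : V) (hu : u ≠ v) :
    HasSum (fun n : ℕ => firstHitProb G u v (n + 1)) 1 := by
  obtain ⟨C, r, hr0, hr1, hC, hbound⟩ := exists_geom v hA hdeg hconn
  rw [(summable_fh v hdeg hconn hA u hu).hasSum_iff_tendsto_nat]
  have hpart : ∀ n : ℕ, ∑ i ∈ Finset.range n, firstHitProb G u v (i + 1) =
      1 - notHit G v n u := by
    intro n
    have := partition v hdeg n u
    linarith
  simp_rw [hpart]
  have hzero : Filter.Tendsto (fun n : ℕ => notHit G v n u) Filter.atTop (nhds 0) := by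
    refine squeeze_zero (fun n => notHit_nonneg (G := G) v n u) (fun n => hbound n u hu) ?_
    have := tendsto_pow_atTop_nhds_zero_of_lt_one (le_of_lt hr0) hr1
    simpa using this.const_mul C
  have := hzero.const_sub 1
  simpa using this

lemma tsum_nfh_eq (u : V) (hu : u ≠ v) :
    hittingTime G u v = 1 + ∑' n : ℕ, (n : ℝ) * firstHitProb G u v (n + 1) := by
  rw [hittingTime, if_neg hu]
  rw [Summable.tsum_eq_zero_add (summable_nfh v hdeg hconn hA u hu)]
  have h1 : ∀ n : ℕ, ((n + 1 : ℕ) : ℝ) * firstHitProb G u v (n + 1) =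
      firstHitProb G u v (n + 1) + (n : ℝ) * firstHitProb G u v (n + 1) := by
    intro n; push_cast; ring
  rw [tsum_congr h1, Summable.tsum_add (summable_fh v hdeg hconn hA u hu) ?hsum]
  case hsum =>
    refine ((summable_shifted v hdeg hconn hA u hu).sub
      (summable_fh v hdeg hconn hA u hu)).congr fun n => ?_
    ring
  rw [(hasSum_fh_one v hdeg hconn hA u hu).tsum_eq]
  simp

lemma hit_eq (u : V) (hu : u ≠ v) :
    hittingTime G u v =
      1 + ∑ b ∈ Finset.univ.filter (· ≠ v), stepProb G u b * hittingTime G b v := by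
  rw [tsum_nfh_eq v hdeg hconn hA u hu]
  congr 1
  have hsummand : Summable (fun n : ℕ => (n : ℝ) * firstHitProb G u v (n + 1)) := by
    refine ((summable_shifted v hdeg hconn hA u hu).sub
      (summable_fh v hdeg hconn hA u hu)).congr fun n => ?_
    ring
  rw [Summable.tsum_eq_zero_add hsummand]
  simp only [Nat.cast_zero, zero_mul, zero_add]
  have hterm : ∀ n : ℕ, ((n + 1 : ℕ) : ℝ) * firstHitProb G u v (n + 1 + 1) =
      ∑ b, (if b = v then 0 else stepProb G u b *
        (((n : ℝ) + 1) * firstHitProb G b v (n + 1))) := by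
    intro n
    rw [firstHit_succ_succ (G := G) v n u, Finset.mul_sum]
    refine Finset.sum_congr rfl fun b _ => ?_
    by_cases hb : b = v
    · simp [hb]
    · rw [if_neg hb, if_neg hb]
      push_cast
      ring
  rw [tsum_congr hterm]
  have hsumm : ∀ b ∈ Finset.univ, Summable (fun n : ℕ => (if b = v then 0 else stepProb G u b *
      (((n : ℝ) + 1) * firstHitProb G b v (n + 1)))) := by
    intro b _
    by_cases hb : b = v
    · simpa [hb] using summable_zero
    · simp only [if_neg hb]
      exact (summable_shifted v hdeg hconn hA b hb).mul_left _
  rw [Summable.tsum_finsetSum hsumm]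
  have hinner : ∀ b : V, (∑' n : ℕ, (if b = v then 0 else stepProb G u b *
      (((n : ℝ) + 1) * firstHitProb G b v (n + 1)))) =
      if b = v then 0 else stepProb G u b * hittingTime G b v := by
    intro b
    by_cases hb : b = v
    · simp [hb]
    · simp only [if_neg hb]
      rw [tsum_mul_left]
      congr 1
      rw [hittingTime, if_neg hb, Summable.tsum_eq_zero_add (summable_nfh v hdeg hconn hA b hb)]
      simp only [Nat.cast_zero, zero_mul, zero_add]
      refine tsum_congr fun n => ?_
      push_cast
      ring
  rw [Finset.sum_congr rfl (fun b _ => hinner b), Finset.sum_filter]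
  refine Finset.sum_congr rfl fun b _ => ?_
  by_cases hb : b = v <;> simp [hb]

end Eq

section Unique

lemma harmonic_le_zero (hdeg : ∀ a, 0 < G.degree a) (hconn : ∀ u : V, G.Reachable u v)
    (δ : V → ℝ) (h0 : δ v = 0)
    (hh : ∀ u, u ≠ v → δ u = ∑ b, stepProb G u b * δ b) : ∀ u, δ u ≤ 0 := by
  have hne : (Finset.univ : Finset V).Nonempty := ⟨v, Finset.mem_univ v⟩
  set M : ℝ := Finset.univ.sup' hne δ with hM
  have hle : ∀ u : V, δ u ≤ M := fun u => Finset.le_sup' δ (Finset.mem_univ u)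
  have key : ∀ n : ℕ, ∀ u : V, G.dist u v ≤ n → δ u = M → M = 0 := by
    intro n
    induction n with
    | zero =>
        intro u hdist huM
        have huv : u = v := ((hconn u).dist_eq_zero_iff).mp (Nat.le_zero.mp hdist)
        rw [← huM, huv, h0]
    | succ n ih =>
        intro u hdist huM
        by_cases huv : u = v
        · rw [← huM, huv, h0]
        · -- all neighbours attain the max
          have hsum0 : ∑ b, stepProb G u b * (M - δ b) = 0 := by
            rw [Finset.sum_congr rfl (fun b _ => mul_sub (stepProb G u b) M (δ b)),
              Finset.sum_sub_distrib, ← Finset.sum_mul, sum_stepProb G (hdeg u), one_mul,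
              ← hh u huv, huM, sub_self]
          have hall : ∀ b ∈ Finset.univ, stepProb G u b * (M - δ b) = 0 := by
            rw [← Finset.sum_eq_zero_iff_of_nonneg]
            · exact hsum0
            · intro b _
              exact mul_nonneg (stepProb_nonneg G u b) (by linarith [hle b])
          obtain ⟨p, hp⟩ := (hconn u).exists_walk_length_eq_dist
          cases p with
          | nil => exact absurd rfl huv
          | @cons _ b _ hadj q =>
              have hblen : G.dist b v ≤ n := by
                have h1 : G.dist b v ≤ q.length := SimpleGraph.dist_le q
                rw [SimpleGraph.Walk.length_cons] at hp
                omega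
              have hb : δ b = M := by
                have := hall b (Finset.mem_univ b)
                rcases mul_eq_zero.mp this with h | h
                · exact absurd h (ne_of_gt (stepProb_pos G hadj))
                · linarith
              exact ih b hblen hb
  obtain ⟨u0, -, hu0⟩ := Finset.exists_mem_eq_sup' hne δ
  intro u
  calc δ u ≤ M := hle u
    _ = 0 := key (G.dist u0 v) u0 le_rfl hu0.symm

lemma harmonic_eq_zero (hdeg : ∀ a, 0 < G.degree a) (hconn : ∀ u : V, G.Reachable u v)
    (δ : V → ℝ) (h0 : δ v = 0)
    (hh : ∀ u, u ≠ v → δ u = ∑ b, stepProb G u b * δ b) : ∀ u, δ u = 0 := by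
  have h1 := harmonic_le_zero v hdeg hconn δ h0 hh
  have h2 := harmonic_le_zero v hdeg hconn (fun u => -δ u) (by simp [h0]) ?_
  · intro u
    have := h1 u
    have := h2 u
    simp at h2
    linarith [h2 u]
  · intro u hu
    rw [neg_eq_iff_eq_neg, ← Finset.sum_neg_distrib]
    rw [hh u hu]
    exact Finset.sum_congr rfl fun b _ => by ring

lemma hitting_eq_of_solution (hdeg : ∀ a, 0 < G.degree a) (hconn : ∀ u : V, G.Reachable u v)
    (hA : (Finset.univ.filter (· ≠ v)).Nonempty) (g : V → ℝ) (hg0 : g v = 0)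
    (hgeq : ∀ u, u ≠ v → g u = 1 + ∑ b ∈ Finset.univ.filter (· ≠ v), stepProb G u b * g b) :
    ∀ u, hittingTime G u v = g u := by
  set δ : V → ℝ := fun u => hittingTime G u v - g u with hδ
  have h0 : δ v = 0 := by simp [hδ, hittingTime, hg0]
  have hh : ∀ u, u ≠ v → δ u = ∑ b, stepProb G u b * δ b := by
    intro u hu
    have hsplit : ∑ b, stepProb G u b * δ b =
        ∑ b ∈ Finset.univ.filter (· ≠ v), stepProb G u b * δ b := by
      rw [Finset.sum_filter]
      refine Finset.sum_congr rfl fun b _ => ?_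
      by_cases hb : b = v
      · simp [hb, h0]
      · simp [hb]
    rw [hsplit]
    have hHu := hit_eq v hdeg hconn hA u hu
    have hgu := hgeq u hu
    simp only [hδ]
    rw [hHu, hgu]
    rw [Finset.sum_congr rfl (fun b _ => mul_sub (stepProb G u b) (hittingTime G b v) (g b)),
      Finset.sum_sub_distrib]
    ring
  intro u
  have := harmonic_eq_zero v hdeg hconn δ h0 hh u
  simp only [hδ] at this
  linarith

lemma hitting_eq_of_solution' (hdeg : ∀ a, 0 < G.degree a) (hconn : ∀ u : V, G.Reachable u v)
    (hex : ∃ w : V, w ≠ v) (g : V → ℝ) (hg0 : g v = 0)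
    (hgeq : ∀ u, u ≠ v → g u = 1 + ∑ b, stepProb G u b * g b) :
    ∀ u, hittingTime G u v = g u := by
  obtain ⟨w, hw⟩ := hex
  have hA : (Finset.univ.filter (· ≠ v)).Nonempty := ⟨w, by simp [hw]⟩
  refine hitting_eq_of_solution v hdeg hconn hA g hg0 ?_
  intro u hu
  rw [hgeq u hu]
  congr 1
  rw [← Finset.sum_filter_add_sum_filter_not Finset.univ (· ≠ v)
    (fun b => stepProb G u b * g b)]
  have hz : ∑ b ∈ Finset.univ.filter (fun b => ¬b ≠ v), stepProb G u b * g b = 0 :=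
    Finset.sum_eq_zero fun b hb => by
      rw [Finset.mem_filter] at hb
      rw [not_not.mp hb.2, hg0, mul_zero]
  rw [hz, add_zero]

end Unique

section Tree

variable (d h : ℕ)

local notation "TV" => (Σ n : Fin (h + 1), Fin (n : ℕ) → Fin d)

lemma tv_ext {a b : TV} (h1 : (a.1 : ℕ) = (b.1 : ℕ))
    (h2 : ∀ (i : ℕ) (hi : i < (a.1 : ℕ)) (hi' : i < (b.1 : ℕ)), a.2 ⟨i, hi⟩ = b.2 ⟨i, hi'⟩) :
    a = b := by
  rcases a with ⟨⟨m, hm⟩, fa⟩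
  rcases b with ⟨⟨k, hk⟩, fb⟩
  simp only at h1 h2
  subst h1
  have hfab : fa = fb := funext fun i => by
    have := h2 i.1 i.isLt i.isLt
    simpa using this
  rw [hfab]

def par (x : TV) (hx : 0 < (x.1 : ℕ)) : TV :=
  ⟨⟨(x.1 : ℕ) - 1, by have := x.1.isLt; omega⟩,
    fun i => x.2 ⟨i.1, by have h3 : (i : ℕ) < (x.1 : ℕ) - 1 := i.isLt; omega⟩⟩

def chld (x : TV) (hx : (x.1 : ℕ) < h) (j : Fin d) : TV :=
  ⟨⟨(x.1 : ℕ) + 1, by omega⟩,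
    fun i => if hi : (i : ℕ) < (x.1 : ℕ) then x.2 ⟨i, hi⟩ else j⟩

lemma par_depth (x : TV) (hx : 0 < (x.1 : ℕ)) : ((par d h x hx).1 : ℕ) = (x.1 : ℕ) - 1 := rfl

lemma chld_depth (x : TV) (hx : (x.1 : ℕ) < h) (j : Fin d) :
    ((chld d h x hx j).1 : ℕ) = (x.1 : ℕ) + 1 := rfl

lemma adj_iff (x y : TV) : (daryTree d h).Adj x y ↔
    (∃ hx : 0 < (x.1 : ℕ), y = par d h x hx) ∨
      (∃ (hx : (x.1 : ℕ) < h) (j : Fin d), y = chld d h x hx j) := by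
  rw [daryTree, SimpleGraph.fromRel_adj]
  constructor
  · rintro ⟨hne, hrel | hrel⟩
    · -- y is a child of x
      obtain ⟨he, hagree⟩ := hrel
      right
      have hxh : (x.1 : ℕ) < h := by
        have := y.1.isLt; omega
      refine ⟨hxh, y.2 ⟨(x.1 : ℕ), by omega⟩, ?_⟩
      refine tv_ext d h (by rw [chld_depth]; omega) ?_
      intro i hi hi'
      rw [chld_depth] at hi'
      show y.2 _ = dite _ _ _
      by_cases hlt : i < (x.1 : ℕ)
      · rw [dif_pos hlt]
        exact hagree ⟨i, hlt⟩
      · rw [dif_neg hlt]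
        have hieq : i = (x.1 : ℕ) := by omega
        exact congrArg y.snd (Fin.ext hieq)
    · -- y is the parent of x
      obtain ⟨he, hagree⟩ := hrel
      left
      have hx0 : 0 < (x.1 : ℕ) := by omega
      refine ⟨hx0, ?_⟩
      refine tv_ext d h (by rw [par_depth]; omega) ?_
      intro i hi hi'
      rw [par_depth] at hi'
      exact (hagree ⟨i, hi⟩).symm
  · rintro (⟨hx, rfl⟩ | ⟨hx, j, rfl⟩)
    · constructor
      · intro hcon
        have := congrArg (fun z : TV => (z.1 : ℕ)) hcon
        simp only [par_depth] at this
        omega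
      · right
        refine ⟨by rw [par_depth]; omega, ?_⟩
        intro i
        rfl
    · constructor
      · intro hcon
        have := congrArg (fun z : TV => (z.1 : ℕ)) hcon
        simp only [chld_depth] at this
        omega
      · left
        refine ⟨by rw [chld_depth], ?_⟩
        intro i
        show dite _ _ _ = x.2 i
        rw [dif_pos i.isLt]

lemma chld_inj (x : TV) (hx : (x.1 : ℕ) < h) : Function.Injective (chld d h x hx) := by
  intro j j' hjj
  have h2 := (Sigma.mk.inj_iff.mp hjj).2
  have hf := eq_of_heq h2
  have := congrFun hf ⟨(x.1 : ℕ), Nat.lt_succ_self _⟩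
  simpa [dif_neg (lt_irrefl (x.1 : ℕ))] using this

lemma par_not_chld (x : TV) (hx : 0 < (x.1 : ℕ)) (hx' : (x.1 : ℕ) < h) (j : Fin d) :
    par d h x hx ≠ chld d h x hx' j := by
  intro hcon
  have := congrArg (fun z : TV => (z.1 : ℕ)) hcon
  simp only [par_depth, chld_depth] at this
  omega

lemma nbr_internal (x : TV) (hx : 0 < (x.1 : ℕ)) (hx' : (x.1 : ℕ) < h) :
    (daryTree d h).neighborFinset x =
      insert (par d h x hx) (Finset.univ.image (chld d h x hx')) := by
  ext b
  rw [SimpleGraph.mem_neighborFinset, adj_iff]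
  simp only [Finset.mem_insert, Finset.mem_image, Finset.mem_univ, true_and]
  constructor
  · rintro (⟨hx0, rfl⟩ | ⟨hx0, j, rfl⟩)
    · left; rfl
    · right; exact ⟨j, rfl⟩
  · rintro (rfl | ⟨j, rfl⟩)
    · exact Or.inl ⟨hx, rfl⟩
    · exact Or.inr ⟨hx', j, rfl⟩

lemma nbr_leaf (x : TV) (hx : 0 < (x.1 : ℕ)) (hxh : (x.1 : ℕ) = h) :
    (daryTree d h).neighborFinset x = {par d h x hx} := by
  ext b
  rw [SimpleGraph.mem_neighborFinset, adj_iff]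
  simp only [Finset.mem_singleton]
  constructor
  · rintro (⟨hx0, rfl⟩ | ⟨hx0, j, rfl⟩)
    · rfl
    · omega
  · rintro rfl
    exact Or.inl ⟨hx, rfl⟩

lemma nbr_root (x : TV) (hx : (x.1 : ℕ) = 0) (hh : 0 < h) :
    (daryTree d h).neighborFinset x =
      Finset.univ.image (chld d h x (by omega)) := by
  ext b
  rw [SimpleGraph.mem_neighborFinset, adj_iff]
  simp only [Finset.mem_image, Finset.mem_univ, true_and]
  constructor
  · rintro (⟨hx0, rfl⟩ | ⟨hx0, j, rfl⟩)
    · omega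
    · exact ⟨j, rfl⟩
  · rintro ⟨j, rfl⟩
    exact Or.inr ⟨by omega, j, rfl⟩

lemma deg_internal (x : TV) (hx : 0 < (x.1 : ℕ)) (hx' : (x.1 : ℕ) < h) (hd : 1 ≤ d) :
    (daryTree d h).degree x = d + 1 := by
  rw [← SimpleGraph.card_neighborFinset_eq_degree, nbr_internal d h x hx hx',
    Finset.card_insert_of_notMem, Finset.card_image_of_injective _ (chld_inj d h x hx')]
  · simp
  · rw [Finset.mem_image]
    rintro ⟨j, -, hj⟩
    exact par_not_chld d h x hx hx' j hj.symm

lemma deg_leaf (x : TV) (hx : 0 < (x.1 : ℕ)) (hxh : (x.1 : ℕ) = h) :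
    (daryTree d h).degree x = 1 := by
  rw [← SimpleGraph.card_neighborFinset_eq_degree, nbr_leaf d h x hx hxh,
    Finset.card_singleton]

lemma deg_root (x : TV) (hx : (x.1 : ℕ) = 0) (hh : 0 < h) :
    (daryTree d h).degree x = d := by
  rw [← SimpleGraph.card_neighborFinset_eq_degree, nbr_root d h x hx hh,
    Finset.card_image_of_injective _ (chld_inj d h x (by omega))]
  simp

lemma deg_pos (hd : 1 ≤ d) (hh : 0 < h) (x : TV) : 0 < (daryTree d h).degree x := by
  rcases Nat.eq_zero_or_pos (x.1 : ℕ) with hx | hx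
  · rw [deg_root d h x hx hh]; omega
  · rcases eq_or_lt_of_le (Nat.le_of_lt_succ x.1.isLt) with hxh | hxh
    · rw [deg_leaf d h x hx hxh]; omega
    · rw [deg_internal d h x hx hxh hd]; omega

lemma eq_root_of_depth_zero (x : TV) (hx : (x.1 : ℕ) = 0) :
    x = (⟨⟨0, Nat.succ_pos h⟩, fun i => (Nat.not_lt_zero _ i.isLt).elim⟩ : TV) := by
  refine tv_ext d h (by simpa using hx) ?_
  intro i hi hi'
  omega

lemma reach_root (x : TV) :
    (daryTree d h).Reachable x
      (⟨⟨0, Nat.succ_pos h⟩, fun i => (Nat.not_lt_zero _ i.isLt).elim⟩ : TV) := by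
  have key : ∀ (k : ℕ) (y : TV), (y.1 : ℕ) = k → (daryTree d h).Reachable y
      (⟨⟨0, Nat.succ_pos h⟩, fun i => (Nat.not_lt_zero _ i.isLt).elim⟩ : TV) := by
    intro k
    induction k with
    | zero =>
        intro y hy
        rw [eq_root_of_depth_zero d h y hy]
    | succ k ih =>
        intro y hy
        have hadj : (daryTree d h).Adj y (par d h y (by omega)) :=
          (adj_iff d h y _).mpr (Or.inl ⟨by omega, rfl⟩)
        exact hadj.reachable.trans (ih (par d h y (by omega)) (by rw [par_depth]; omega))
  exact key (x.1 : ℕ) x rfl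

end Tree

section Algebra

lemma f_zero' (x : ℝ) : f 0 x = 0 := by rw [f]; norm_num

lemma f_one (x : ℝ) : f 1 x = 1 := by rw [f]; norm_num

lemma f_diff (x : ℝ) (m : ℕ) :
    f (m + 1) x = f m x + 2 * x ^ m + 2 * (∑ i ∈ Finset.range m, x ^ i) - 1 := by
  rcases Nat.eq_zero_or_pos m with hm | hm
  · subst hm
    rw [f_one, f_zero']
    norm_num
  · rw [f, f, if_neg (Nat.succ_ne_zero m), if_neg (by omega)]
    rw [Finset.sum_range_succ]
    have hcong : ∀ i ∈ Finset.range m, ((2 * ((m : ℕ) + 1 : ℕ) : ℝ) - 2 * i) * x ^ i =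
        ((2 * (m : ℕ) : ℝ) - 2 * i) * x ^ i + 2 * x ^ i := by
      intro i _
      push_cast
      ring
    rw [Finset.sum_congr rfl hcong, Finset.sum_add_distrib, ← Finset.mul_sum]
    push_cast
    ring

lemma f_rec (x : ℝ) (m : ℕ) :
    f (m + 2) x + x * f m x = (x + 1) * f (m + 1) x + (x + 1) := by
  have h1 := f_diff x (m + 1)
  have h2 := f_diff x m
  have hS : (∑ i ∈ Finset.range (m + 1), x ^ i) =
      1 + x * (∑ i ∈ Finset.range m, x ^ i) := by
    rw [Finset.sum_range_succ', Finset.mul_sum,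
      Finset.sum_congr rfl (fun i _ => pow_succ' x i)]
    ring
  have h3 : (m : ℕ) + 1 + 1 = m + 2 := by omega
  rw [h3] at h1
  linear_combination h1 - x * h2 + 2 * hS

end Algebra

section Verify

variable (d h : ℕ)

local notation "TV" => (Σ n : Fin (h + 1), Fin (n : ℕ) → Fin d)

def rootV : TV := ⟨⟨0, Nat.succ_pos h⟩, fun i => (Nat.not_lt_zero _ i.isLt).elim⟩

local notation "rt" => rootV d h

lemma g_eq (hd : 1 ≤ d) (hh : 0 < h) (x : TV) (hx : x ≠ rt) :
    f h (d : ℝ) - f (h - (x.1 : ℕ)) (d : ℝ) = 1 +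
      ∑ b, stepProb (daryTree d h) x b *
        (f h (d : ℝ) - f (h - (b.1 : ℕ)) (d : ℝ)) := by
  have hx0 : 0 < (x.1 : ℕ) := by
    rcases Nat.eq_zero_or_pos (x.1 : ℕ) with h0 | h0
    · exact absurd (eq_root_of_depth_zero d h x h0) hx
    · exact h0
  set g : TV → ℝ := fun b => f h (d : ℝ) - f (h - (b.1 : ℕ)) (d : ℝ) with hg
  have hgrt : g rt = 0 := by
    have h0 : ((rootV d h).1 : ℕ) = 0 := rfl
    simp only [hg, h0, Nat.sub_zero, sub_self]
  have hstep : ∑ b, stepProb (daryTree d h) x b * g b =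
      ∑ b ∈ (daryTree d h).neighborFinset x,
        (1 / ((daryTree d h).degree x : ℝ)) * g b := by
    rw [SimpleGraph.neighborFinset_eq_filter, Finset.sum_filter]
    refine Finset.sum_congr rfl fun b _ => ?_
    rw [stepProb]
    by_cases hadj : (daryTree d h).Adj x b <;> simp [hadj]
  rw [hstep]
  rcases eq_or_lt_of_le (Nat.le_of_lt_succ x.1.isLt) with hxh | hxh
  · -- leaf
    rw [nbr_leaf d h x hx0 hxh, deg_leaf d h x hx0 hxh, Finset.sum_singleton]
    simp only [hg, par_depth]
    have h1 : h - ((x.1 : ℕ) - 1) = 1 := by omega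
    have h2 : h - (x.1 : ℕ) = 0 := by omega
    rw [h1, h2, f_one, f_zero']
    norm_num
  · -- internal vertex
    rw [nbr_internal d h x hx0 hxh, deg_internal d h x hx0 hxh hd, Finset.sum_insert, 
      Finset.sum_image (fun a _ b _ hab => chld_inj d h x hxh hab)]
    swap
    · rw [Finset.mem_image]
      rintro ⟨j, -, hj⟩
      exact par_not_chld d h x hx0 hxh j hj.symm
    simp only [hg, par_depth, chld_depth]
    rw [Finset.sum_const, Finset.card_univ, Fintype.card_fin, nsmul_eq_mul]
    set m' := h - (x.1 : ℕ) - 1 with hm'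
    have e1 : h - ((x.1 : ℕ) - 1) = m' + 2 := by omega
    have e2 : h - (x.1 : ℕ) = m' + 1 := by omega
    have e3 : h - ((x.1 : ℕ) + 1) = m' := by omega
    rw [e1, e2, e3]
    have hrec := f_rec (d : ℝ) m'
    have hd1 : ((d : ℝ) + 1) ≠ 0 := by positivity
    have hcast : ((d + 1 : ℕ) : ℝ) = (d : ℝ) + 1 := by push_cast; ring
    rw [hcast]
    field_simp
    linear_combination hrec

lemma root_ne_exists (hd : 1 ≤ d) (hh : 0 < h) :
    (Finset.univ.filter (· ≠ rt)).Nonempty := by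
  refine ⟨chld d h rt (by exact hh) ⟨0, by omega⟩, ?_⟩
  simp only [Finset.mem_filter, Finset.mem_univ, true_and]
  intro hcon
  have := congrArg (fun z : TV => (z.1 : ℕ)) hcon
  change ((rootV d h).1 : ℕ) + 1 = ((rootV d h).1 : ℕ) at this
  simp at this

end Verify

end HT

open HT in
theorem stmt_13 (d h : ℕ) (hd : 1 ≤ d)
    (u : Σ n : Fin (h + 1), Fin (n : ℕ) → Fin d) (l : ℕ) (hl : (u.1 : ℕ) = l)
    (root : Σ n : Fin (h + 1), Fin (n : ℕ) → Fin d)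
    (hroot : root = ⟨⟨0, Nat.succ_pos h⟩, fun i => (Nat.not_lt_zero _ i.isLt).elim⟩) :
    hittingTime (daryTree d h) u root = f h d - f (h - l) d := by
  subst hroot
  subst hl
  have hroot' : (⟨⟨0, Nat.succ_pos h⟩, fun i => (Nat.not_lt_zero _ i.isLt).elim⟩ :
      Σ n : Fin (h + 1), Fin (n : ℕ) → Fin d) = rootV d h := rfl
  rw [hroot']
  by_cases hu : u = rootV d h
  · rw [hu, hittingTime, if_pos rfl]
    have h0 : ((rootV d h).1 : ℕ) = 0 := rfl
    rw [h0, Nat.sub_zero, sub_self]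
  · have hh : 0 < h := by
      rcases Nat.eq_zero_or_pos h with h0 | h0
      · exfalso
        apply hu
        have hdep : (u.1 : ℕ) = 0 := by have := u.1.isLt; omega
        exact eq_root_of_depth_zero d h u hdep
      · exact h0
    have hg0 : f h (d : ℝ) - f (h - ((rootV d h).1 : ℕ)) (d : ℝ) = 0 := by
      have h0 : ((rootV d h).1 : ℕ) = 0 := rfl
      rw [h0, Nat.sub_zero, sub_self]
    exact hitting_eq_of_solution' (rootV d h) (deg_pos d h hd hh) (reach_root d h)
      ⟨u, hu⟩
      (fun x => f h (d : ℝ) - f (h - (x.1 : ℕ)) (d : ℝ)) hg0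
      (fun x hx => g_eq d h hd hh x hx) u
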